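/- Let G be the semidirect product (ZMod 3 × ZMod 3) ⋊ ZMod 4, where the generator 1 of ZMod 4 acts by the automorphism (x, y) ↦ (−y, x). Then the index of every subgroup of G lies in the set {1, 2, 4, 6, 9, 12, 18, 36}. Equivalently, every transitive action of G on a set with more than one element has orbit size in {2, 4, 6, 9, 12, 18, 36}. -/

import Mathlib

/-- The order-4 automorphism `(x, y) ↦ (-y, x)` of `ZMod 3 × ZMod 3`,
viewed as an automorphism of the corresponding multiplicative group. -/
def rotAut : MulAut (Multiplicative (ZMod 3 × ZMod 3)) where
  toFun p := Multiplicative.ofAdd (-(Multiplicative.toAdd p).2, (Multiplicative.toAdd p).1)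
  invFun p := Multiplicative.ofAdd ((Multiplicative.toAdd p).2, -(Multiplicative.toAdd p).1)
  left_inv p := by simp
  right_inv p := by simp
  map_mul' p q := by
    simp only [toAdd_mul, Prod.fst_add, Prod.snd_add, ← ofAdd_add]
    congr 1
    simp [Prod.ext_iff, neg_add, add_comm]

/-- The homomorphism `ZMod n → M` sending `1` to a fixed element `ψ` with `ψ ^ n = 1`. -/
def zmodPowHom (n : ℕ) [NeZero n] {M : Type*} [Monoid M] (ψ : M) (h : ψ ^ n = 1) :
    Multiplicative (ZMod n) →* M where
  toFun k := ψ ^ (Multiplicative.toAdd k).val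
  map_one' := by simp
  map_mul' a b := by
    have key : ∀ m : ℕ, ψ ^ (m % n) = ψ ^ m := by
      intro m
      conv_rhs => rw [← Nat.mod_add_div m n]
      rw [pow_add, pow_mul, h, one_pow, mul_one]
    show ψ ^ (Multiplicative.toAdd (a * b)).val = _
    rw [toAdd_mul, ZMod.val_add, key, pow_add]

lemma rotAut_pow_four : rotAut ^ 4 = 1 := by
  ext p : 1
  rw [pow_succ, pow_succ, pow_succ, pow_one]
  simp only [MulAut.mul_apply, MulAut.one_apply]
  simp [rotAut]

/-- The group `(ZMod 3 × ZMod 3) ⋊ ZMod 4`, where the generator `1` of `ZMod 4`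
acts by the automorphism `(x, y) ↦ (-y, x)`; this is the group with GAP ID `[36,9]`. -/
abbrev G369 : Type :=
  SemidirectProduct (Multiplicative (ZMod 3 × ZMod 3)) (Multiplicative (ZMod 4))
    (zmodPowHom 4 rotAut rotAut_pow_four)

def gEquiv : G369 ≃ (Multiplicative (ZMod 3 × ZMod 3)) × (Multiplicative (ZMod 4)) where
  toFun x := (x.left, x.right)
  invFun p := ⟨p.1, p.2⟩
  left_inv x := rfl
  right_inv p := rfl

instance : Finite G369 := Finite.of_equiv _ gEquiv.symm

lemma card_G369 : Nat.card G369 = 36 := by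
  rw [Nat.card_congr gEquiv]
  simp [Nat.card_prod, Nat.card_zmod]

lemma zmod3_key : ∀ (j u v : ZMod 3), j * u = -v → j * v = u → u = 0 ∧ v = 0 := by
  decide

set_option maxHeartbeats 1000000 in
open SemidirectProduct in
lemma no_small_normal (N : Subgroup G369) (hn : N.Normal)
    (hcard : Nat.card N = 6 ∨ Nat.card N = 12) : False := by
  have h3 : 3 ∣ Nat.card N := by rcases hcard with h | h <;> rw [h] <;> norm_num
  have : Fact (Nat.Prime 3) := ⟨by norm_num⟩
  obtain ⟨x', hx'⟩ := exists_prime_orderOf_dvd_card' (G := N) 3 h3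
  set x : G369 := (x' : G369) with hxdef
  have hx : orderOf x = 3 := (Subgroup.orderOf_coe x').trans hx'
  have hxN : x ∈ N := x'.2
  have hker : x ∈ (inl : _ →* G369).range := by
    rw [range_inl_eq_ker_rightHom, MonoidHom.mem_ker]
    have h1 := orderOf_map_dvd (rightHom (φ := zmodPowHom 4 rotAut rotAut_pow_four)) x
    rw [hx] at h1
    have h2 : orderOf (rightHom (φ := zmodPowHom 4 rotAut rotAut_pow_four) x) ∣ 4 := by
      have := orderOf_dvd_natCard (rightHom (φ := zmodPowHom 4 rotAut rotAut_pow_four) x)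
      simpa [Nat.card_zmod] using this
    have h4 := Nat.dvd_gcd h1 h2
    norm_num at h4
    simpa using h4
  obtain ⟨n, hnx⟩ := id hker
  set K : Subgroup G369 := N ⊓ (inl : _ →* G369).range with hK
  have hcard9 : Nat.card ((inl : _ →* G369).range) = 9 := by
    have : Nat.card ((inl : _ →* G369).range) =
        Nat.card (Multiplicative (ZMod 3 × ZMod 3)) :=
      Nat.card_congr (Equiv.ofInjective _ inl_injective).symm
    simpa [Nat.card_prod, Nat.card_zmod] using this
  have hKdvd : Nat.card K ∣ 3 := by
    have d1 : Nat.card K ∣ Nat.card N := Subgroup.card_dvd_of_le inf_le_left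
    have d2 : Nat.card K ∣ 9 := hcard9 ▸ Subgroup.card_dvd_of_le inf_le_right
    rcases hcard with h | h <;> rw [h] at d1 <;>
      exact (Nat.dvd_gcd d1 d2).trans (by norm_num)
  have hzK : Subgroup.zpowers x ≤ K := by
    rw [Subgroup.zpowers_le]
    exact ⟨hxN, hker⟩
  have hKeq : Subgroup.zpowers x = K := by
    apply Subgroup.eq_of_le_of_card_ge hzK
    rw [Nat.card_zpowers, hx]
    exact Nat.le_of_dvd (by norm_num) hKdvd
  -- conjugate of x lies in K
  set g₀ : Multiplicative (ZMod 4) := Multiplicative.ofAdd 1 with hg0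
  have hc : inl ((zmodPowHom 4 rotAut rotAut_pow_four) g₀ n) ∈ K := by
    constructor
    · rw [inl_aut, hnx]
      simpa using hn.conj_mem x hxN (inr g₀)
    · exact ⟨_, rfl⟩
  rw [← hKeq, Subgroup.mem_zpowers_iff] at hc
  obtain ⟨k, hk⟩ := hc
  rw [← hnx, ← map_zpow] at hk
  have hk' : n ^ k = (zmodPowHom 4 rotAut rotAut_pow_four) g₀ n := inl_injective hk
  have hφ : (zmodPowHom 4 rotAut rotAut_pow_four) g₀ n = rotAut n := by
    show (rotAut ^ (Multiplicative.toAdd g₀).val) n = _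
    have hv : (Multiplicative.toAdd g₀).val = 1 := rfl
    rw [hv, pow_one]
  rw [hφ] at hk'
  -- translate to additive coordinates
  set a : ZMod 3 × ZMod 3 := Multiplicative.toAdd n with ha
  have hadd : k • a = (-a.2, a.1) := by
    have := congrArg Multiplicative.toAdd hk'
    rwa [toAdd_zpow] at this
  have hne : a ≠ 0 := by
    intro h0
    have : n = 1 := by
      rw [← ofAdd_toAdd n, ← ha, h0, ofAdd_zero]
    rw [← hnx, this, map_one, orderOf_one] at hx
    norm_num at hx
  have h1 : (k : ZMod 3) * a.1 = -a.2 := by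
    have := congrArg Prod.fst hadd
    simpa [zsmul_eq_mul] using this
  have h2 : (k : ZMod 3) * a.2 = a.1 := by
    have := congrArg Prod.snd hadd
    simpa [zsmul_eq_mul] using this
  obtain ⟨e1, e2⟩ := zmod3_key _ _ _ h1 h2
  exact hne (Prod.ext e1 e2)

/-- The index of every subgroup of `(ZMod 3 × ZMod 3) ⋊ ZMod 4` (GAP ID `[36,9]`)
lies in `{1, 2, 4, 6, 9, 12, 18, 36}`. -/
theorem index_subgroup_G369 (H : Subgroup G369) :
    H.index ∈ ({1, 2, 4, 6, 9, 12, 18, 36} : Set ℕ) := by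
  have h36 : Nat.card G369 = 36 := card_G369
  have hdvd : H.index ∣ 36 := h36 ▸ H.index_dvd_card
  have hne3 : H.index ≠ 3 := by
    intro hidx
    set N := H.normalCore with hN
    have hHd : H.index ∣ N.index := Subgroup.index_dvd_of_le H.normalCore_le
    rw [hidx] at hHd
    have h3N : 3 ∣ N.index := hHd
    have hq : Nat.card (G369 ⧸ H) = 3 := by rw [← Subgroup.index_eq_card]; exact hidx
    haveI : DecidableEq (G369 ⧸ H) := Classical.decEq _
    haveI : Fintype (G369 ⧸ H) := Fintype.ofFinite _
    have hrange : N.index ∣ 6 := by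
      rw [hN, Subgroup.normalCore_eq_ker, Subgroup.index_ker]
      have hd := Subgroup.card_subgroup_dvd_card (MulAction.toPermHom G369 (G369 ⧸ H)).range
      have hperm : Nat.card (Equiv.Perm (G369 ⧸ H)) = 6 := by
        have h3' : Fintype.card (G369 ⧸ H) = 3 := by
          rw [← Nat.card_eq_fintype_card]; exact hq
        rw [Nat.card_eq_fintype_card, Fintype.card_perm, h3']
        rfl
      rwa [hperm] at hd
    have hmul := Subgroup.index_mul_card N
    rw [h36] at hmul
    have hpos : 0 < N.index := Nat.pos_of_dvd_of_pos hrange (by norm_num)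
    have hle : N.index ≤ 6 := Nat.le_of_dvd (by norm_num) hrange
    obtain ⟨i, hi⟩ : ∃ i, N.index = i := ⟨_, rfl⟩
    rw [hi] at hrange h3N hmul hpos hle
    interval_cases i
    · omega
    · omega
    · exact no_small_normal N inferInstance (Or.inr (by omega))
    · omega
    · omega
    · exact no_small_normal N inferInstance (Or.inl (by omega))
  simp only [Set.mem_insert_iff, Set.mem_singleton_iff]
  have hpos : 0 < H.index := Nat.pos_of_dvd_of_pos hdvd (by norm_num)
  have hle : H.index ≤ 36 := Nat.le_of_dvd (by norm_num) hdvd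
  obtain ⟨i, hi⟩ : ∃ i, H.index = i := ⟨_, rfl⟩
  rw [hi] at hdvd hne3 hpos hle ⊢
  interval_cases i <;> omega
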